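/- With the path-family decomposition (for each path π_i ∈ Π, A_i the tree edges on π_i and B_i the non-tree edges f whose tree-path decomposition uses π_i), a pair (e,f) is a swap for T if and only if there exists an index i with e ∈ A_i and f ∈ B_i. Consequently, a parameter vector p makes T the unique minimum spanning tree if and only if for every i, every edge of A_i has weight strictly less than every edge of B_i under p. -/

import Mathlib

open SimpleGraph
open scoped Classical

/-- Dot product on `ℝ^d`. -/
def dot {d : ℕ} (x y : Fin d → ℝ) : ℝ := ∑ i, x i * y i

/-- `T` is a spanning tree of `G`. -/
def IsSpanningTree {V : Type*} (G T : SimpleGraph V) : Prop :=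
  T ≤ G ∧ T.IsTree

/-- `(e, f)` is a swap for the spanning tree `T` of `G`. -/
def IsSwap {V : Type*} (G T : SimpleGraph V) (e f : Sym2 V) : Prop :=
  e ∈ T.edgeSet ∧ f ∈ G.edgeSet ∧ f ∉ T.edgeSet ∧
    IsSpanningTree G (SimpleGraph.fromEdgeSet ((insert f T.edgeSet) \ {e}))

open scoped Classical in
/-- Total parametric weight of (the edges of) a graph. -/
noncomputable def paramWeight {V : Type*} [Fintype V] {d : ℕ} (T : SimpleGraph V)
    (cost : Sym2 V → Fin d → ℝ) (p : Fin d → ℝ) : ℝ :=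
  ∑ e ∈ T.edgeFinset, dot (cost e) p

set_option linter.unusedSectionVars false
namespace SwapAux
variable {V : Type*}

lemma reachable_of_walk {H H' : SimpleGraph V}
    (hadj : ∀ a b, H.Adj a b → H'.Reachable a b) {x y : V} (p : H.Walk x y) :
    H'.Reachable x y := by
  induction p with
  | nil => exact Reachable.refl _
  | cons h _ ih => exact (hadj _ _ h).trans ih

lemma exists_crossing {H : SimpleGraph V} (R : V → Prop) {x y : V} (p : H.Walk x y)
    (hx : R x) (hy : ¬ R y) :
    ∃ a b, H.Adj a b ∧ s(a, b) ∈ p.edges ∧ R a ∧ ¬ R b := by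
  induction p with
  | nil => exact absurd hx hy
  | @cons x w y h p ih =>
    by_cases hR : R w
    · obtain ⟨a, b, h1, h2, h3, h4⟩ := ih hR hy
      exact ⟨a, b, h1, List.mem_cons_of_mem _ h2, h3, h4⟩
    · exact ⟨x, w, h, List.mem_cons_self, hx, hR⟩


lemma edgeSet_fromEdgeSet_eq {s : Set (Sym2 V)} (h : ∀ e ∈ s, ¬ e.IsDiag) :
    (fromEdgeSet s).edgeSet = s := by
  rw [edgeSet_fromEdgeSet]
  ext x
  simp only [Set.mem_diff, Set.mem_setOf_eq, and_iff_left_iff_imp]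
  exact h x

lemma tree_edges_not_diag {T : SimpleGraph V} {e : Sym2 V} (he : e ∈ T.edgeSet) : ¬ e.IsDiag :=
  T.not_isDiag_of_mem_edgeSet he

/-- In a tree, `u` and `v` are reachable after deleting `e` iff `e` is not on the
unique `u`-`v` path. -/
lemma reachable_del_iff {T : SimpleGraph V} (hT : T.IsTree) {u v : V}
    (p : T.Walk u v) (hp : p.IsPath) (e : Sym2 V) :
    (fromEdgeSet (T.edgeSet \ {e})).Reachable u v ↔ e ∉ p.edges := by
  have hes : (fromEdgeSet (T.edgeSet \ {e})).edgeSet = T.edgeSet \ {e} :=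
    edgeSet_fromEdgeSet_eq (fun x hx => tree_edges_not_diag hx.1)
  constructor
  · rintro ⟨q⟩ hmem
    have hq : ∀ x ∈ q.edges, x ∈ T.edgeSet := by
      intro x hx
      have := q.edges_subset_edgeSet hx
      rw [hes] at this
      exact this.1
    set q' := (q.transfer T hq).toPath with hq'
    have : p = (q'.val : T.Walk u v) :=
      ((hT.existsUnique_path u v).unique hp q'.prop)
    have hsub : e ∈ (q.transfer T hq).edges := by
      apply Walk.edges_toPath_subset
      rw [← this]; exact hmem
    rw [Walk.edges_transfer] at hsub
    have := q.edges_subset_edgeSet hsub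
    rw [hes] at this
    exact this.2 rfl
  · intro hmem
    refine ⟨p.transfer _ (fun x hx => ?_)⟩
    rw [hes]
    exact ⟨p.edges_subset_edgeSet hx, fun h => hmem (h ▸ hx)⟩

/-- After deleting the edge `s(a,b)` from any graph, the end of any path starting at `a`
is still reachable from `a` or from `b`. -/
lemma reachable_endpoint {T : SimpleGraph V} {a b x : V} (q : T.Walk a x) (hq : q.IsPath) :
    (fromEdgeSet (T.edgeSet \ {s(a, b)})).Reachable a x ∨
      (fromEdgeSet (T.edgeSet \ {s(a, b)})).Reachable b x := by
  have hes : (fromEdgeSet (T.edgeSet \ {s(a, b)})).edgeSet = T.edgeSet \ {s(a, b)} :=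
    edgeSet_fromEdgeSet_eq (fun x hx => tree_edges_not_diag hx.1)
  by_cases hmem : s(a, b) ∈ q.edges
  · cases q with
    | nil => simp at hmem
    | @cons _ w _ h q' =>
      have hq'mem : s(a, b) ∉ q'.edges := by
        intro hc
        exact (Walk.cons_isPath_iff _ _).1 hq |>.2 (q'.fst_mem_support_of_mem_edges hc)
      have hfirst : s(a, b) = s(a, w) := by
        rcases List.mem_cons.1 hmem with h1 | h1
        · exact h1
        · exact absurd h1 hq'mem
      have hwb : w = b := by
        rw [Sym2.eq_iff] at hfirst
        rcases hfirst with ⟨-, rfl⟩ | ⟨h1, h2⟩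
        · rfl
        · exact absurd h1 h.ne
      subst hwb
      refine Or.inr ⟨q'.transfer _ (fun x hx => ?_)⟩
      rw [hes]
      exact ⟨q'.edges_subset_edgeSet hx, fun hc => hq'mem (hc ▸ hx)⟩
  · refine Or.inl ⟨q.transfer _ (fun x hx => ?_)⟩
    rw [hes]
    exact ⟨q.edges_subset_edgeSet hx, fun hc => hmem (hc ▸ hx)⟩


lemma swap_iff {G T : SimpleGraph V} (hT : IsSpanningTree G T)
    {u v : V} {f : Sym2 V} (hfG : f ∈ G.edgeSet) (hfT : f ∉ T.edgeSet) (hf : f = s(u, v))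
    (p : T.Walk u v) (hp : p.IsPath) {e : Sym2 V} (heT : e ∈ T.edgeSet) :
    IsSpanningTree G (fromEdgeSet ((insert f T.edgeSet) \ {e})) ↔ e ∈ p.edges := by
  subst hf
  have hef : e ≠ s(u, v) := fun h => hfT (h ▸ heT)
  set s : Set (Sym2 V) := (insert s(u, v) T.edgeSet) \ {e} with hs
  have hs_nd : ∀ x ∈ s, ¬ x.IsDiag := by
    rintro x ⟨hx, -⟩
    rcases Set.mem_insert_iff.1 hx with rfl | hx
    · exact G.not_isDiag_of_mem_edgeSet hfG
    · exact T.not_isDiag_of_mem_edgeSet hx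
  have hses : (fromEdgeSet s).edgeSet = s := edgeSet_fromEdgeSet_eq hs_nd
  have hfs : s(u, v) ∈ s := ⟨Set.mem_insert _ _, fun h => hef (Set.mem_singleton_iff.1 h).symm⟩
  have hadj_uv : (fromEdgeSet s).Adj u v := by
    rw [← mem_edgeSet, hses]; exact hfs
  have hTe_le : fromEdgeSet (T.edgeSet \ {e}) ≤ fromEdgeSet s :=
    fromEdgeSet_mono (Set.diff_subset_diff_left (Set.subset_insert _ _))
  have hfp : s(u, v) ∉ p.edges := fun h => hfT (p.edges_subset_edgeSet h)
  constructor
  · intro hST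
    by_contra hep
    -- transfer p and close the cycle with f
    have hsub : ∀ x ∈ p.edges, x ∈ (fromEdgeSet s).edgeSet := by
      intro x hx
      rw [hses]
      exact ⟨Set.mem_insert_of_mem _ (p.edges_subset_edgeSet hx),
        fun h => hep ((Set.mem_singleton_iff.1 h) ▸ hx)⟩
    have hpath : (p.transfer _ hsub).IsPath := hp.transfer _
    have hcyc := Path.cons_isCycle ⟨(p.transfer _ hsub).reverse, hpath.reverse⟩ hadj_uv ?hne
    case hne =>
      rw [Walk.edges_reverse, List.mem_reverse, Walk.edges_transfer]
      exact hfp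
    exact hST.2.IsAcyclic _ hcyc
  · intro hep
    refine ⟨?_, ?_, ?_⟩
    · calc fromEdgeSet s ≤ fromEdgeSet G.edgeSet := by
            refine fromEdgeSet_mono ?_
            rintro x ⟨hx, -⟩
            rcases Set.mem_insert_iff.1 hx with rfl | hx
            · exact hfG
            · exact edgeSet_subset_edgeSet.2 hT.1 hx
        _ = G := fromEdgeSet_edgeSet G
    · -- connected
      have hnuv : ¬ (fromEdgeSet (T.edgeSet \ {e})).Reachable u v := by
        rw [reachable_del_iff hT.2 p hp]; simpa using hep
      haveI : Nonempty V := hT.2.isConnected.nonempty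
      refine Connected.mk fun x y => ?_
      refine reachable_of_walk (fun a b hab => ?_) ((hT.2.isConnected x y).some)
      by_cases hx : s(a, b) = e
      · -- use the detour through f
        have hkey : ∀ z : V, (fromEdgeSet (T.edgeSet \ {e})).Reachable a z ∨
            (fromEdgeSet (T.edgeSet \ {e})).Reachable b z := by
          intro z
          have q := (hT.2.isConnected a z).some.toPath
          have := reachable_endpoint (b := b) q.val q.prop
          rwa [hx] at this
        have hru : _ ∨ _ := hkey u
        have hrv : _ ∨ _ := hkey v
        have huv' : (fromEdgeSet s).Reachable u v := hadj_uv.reachable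
        rcases hru with hau | hbu <;> rcases hrv with hav | hbv
        · exact absurd (hau.symm.trans hav) hnuv
        · exact ((hau.mono hTe_le).trans (huv'.trans (hbv.mono hTe_le).symm))
        · exact (hav.mono hTe_le).trans (huv'.symm.trans (hbu.mono hTe_le).symm)
        · exact absurd (hbu.symm.trans hbv) hnuv
      · refine Adj.reachable ?_
        rw [← mem_edgeSet, hses, hs, Set.mem_diff, Set.mem_singleton_iff]
        exact ⟨Set.mem_insert_of_mem _ hab, hx⟩
    · -- acyclic
      intro w c hc
      by_cases hfc : s(u, v) ∈ c.edges
      · have hre : (fromEdgeSet s \ fromEdgeSet {s(u, v)}).Reachable u v :=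
          ((adj_and_reachable_delete_edges_iff_exists_cycle
            (G := fromEdgeSet s) (v := u) (w := v)).2 ⟨w, c, hc, hfc⟩).2
        have hTe_es : (fromEdgeSet (T.edgeSet \ {e})).edgeSet = T.edgeSet \ {e} :=
          edgeSet_fromEdgeSet_eq (fun x hx => T.not_isDiag_of_mem_edgeSet hx.1)
        have hle : (fromEdgeSet s \ fromEdgeSet {s(u, v)}) ≤ fromEdgeSet (T.edgeSet \ {e}) := by
          rw [← edgeSet_subset_edgeSet, edgeSet_sdiff, hses, hTe_es]
          rintro x ⟨⟨hx1, hx2⟩, hx3⟩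
          rw [edgeSet_fromEdgeSet] at hx3
          simp only [Set.mem_diff, Set.mem_singleton_iff, Set.mem_setOf_eq, not_and,
            not_not] at hx3
          have hxf : x ≠ s(u, v) := by
            intro h
            exact G.not_isDiag_of_mem_edgeSet hfG (h ▸ hx3 h)
          rcases Set.mem_insert_iff.1 hx1 with h | hx1
          · exact absurd h hxf
          · exact Set.mem_diff_of_mem hx1 hx2
        have := hre.mono hle
        rw [reachable_del_iff hT.2 p hp] at this
        exact this hep
      · have hsub : ∀ x ∈ c.edges, x ∈ T.edgeSet := by
          intro x hx
          have hx' := c.edges_subset_edgeSet hx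
          rw [hses] at hx'
          rcases Set.mem_insert_iff.1 hx'.1 with h | h
          · exact absurd (h ▸ hx) hfc
          · exact h
        exact hT.2.IsAcyclic _ (hc.transfer hsub)


variable [Fintype V] [DecidableEq V]

lemma edgeFinset_irrel' {H : SimpleGraph V} {i1 i2 : Fintype H.edgeSet} :
    @edgeFinset V H i1 = @edgeFinset V H i2 := by
  ext x; simp only [mem_edgeFinset]

lemma edgeFinset_swap {T : SimpleGraph V} {e f : Sym2 V}
    (hf : ¬ f.IsDiag) (hef : e ≠ f) :
    (fromEdgeSet (insert f T.edgeSet \ {e})).edgeFinset = insert f (T.edgeFinset.erase e) := by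
  ext x
  simp only [mem_edgeFinset, edgeSet_fromEdgeSet, Set.mem_diff, Set.mem_insert_iff,
    Set.mem_singleton_iff, Set.mem_setOf_eq, Finset.mem_insert, Finset.mem_erase]
  constructor
  · rintro ⟨⟨rfl | hx, hxe⟩, -⟩
    · exact Or.inl rfl
    · exact Or.inr ⟨hxe, hx⟩
  · rintro (rfl | ⟨hxe, hx⟩)
    · exact ⟨⟨Or.inl rfl, fun h => hef h.symm⟩, hf⟩
    · exact ⟨⟨Or.inr hx, hxe⟩, T.not_isDiag_of_mem_edgeSet hx⟩

lemma tree_eq_of_subset {T T' : SimpleGraph V} (hT : T.IsTree) (hT' : T'.IsTree)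
    (h : T'.edgeFinset ⊆ T.edgeFinset) : T' = T := by
  have h1 := hT.card_edgeFinset
  have h2 := hT'.card_edgeFinset
  have := Finset.eq_of_subset_of_card_le h (by omega)
  rwa [edgeFinset_inj] at this

lemma sum_swap_eq {s : Finset (Sym2 V)} {e f : Sym2 V} (he : e ∈ s) (hf : f ∉ s)
    (w : Sym2 V → ℝ) :
    ∑ x ∈ insert f (s.erase e), w x = ∑ x ∈ s, w x + w f - w e := by
  rw [Finset.sum_insert (fun h => hf (Finset.mem_of_mem_erase h)),
    Finset.sum_erase_eq_sub he]
  ring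

lemma weight_lt {G T : SimpleGraph V}
    (hT : IsSpanningTree G T) (w : Sym2 V → ℝ)
    (hyp : ∀ (u v : V) (f : Sym2 V), f = s(u, v) → f ∈ G.edgeSet → f ∉ T.edgeSet →
      ∀ q : T.Walk u v, q.IsPath → ∀ e ∈ q.edges, w e < w f) :
    ∀ (n : ℕ) (T' : SimpleGraph V), IsSpanningTree G T' → T' ≠ T →
      (T'.edgeFinset \ T.edgeFinset).card ≤ n →
      ∑ e ∈ T.edgeFinset, w e < ∑ e ∈ T'.edgeFinset, w e := by
  intro n
  induction n with
  | zero =>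
    intro T' hT' hne hcard
    exfalso
    apply hne
    refine tree_eq_of_subset hT.2 hT'.2 ?_
    rw [← Finset.sdiff_eq_empty_iff_subset]
    exact Finset.card_eq_zero.1 (Nat.le_zero.1 hcard)
  | succ n ih =>
    intro T' hT' hne hcard
    have hnonempty : (T'.edgeFinset \ T.edgeFinset).Nonempty := by
      rw [Finset.sdiff_nonempty]
      intro hsub
      exact hne (tree_eq_of_subset hT.2 hT'.2 hsub)
    obtain ⟨f, hfmem⟩ := hnonempty
    rw [Finset.mem_sdiff, mem_edgeFinset, mem_edgeFinset] at hfmem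
    obtain ⟨hfT', hfT⟩ := hfmem
    obtain ⟨u, v, rfl⟩ : ∃ u v, f = s(u, v) :=
      ⟨f.out.1, f.out.2, by exact (Quot.out_eq f).symm⟩
    have hadj' : T'.Adj u v := hfT'
    have hfG : s(u, v) ∈ G.edgeSet := edgeSet_subset_edgeSet.2 hT'.1 hfT'
    obtain ⟨p, hp, -⟩ := hT.2.existsUnique_path u v
    -- u, v not reachable in T' minus f
    have hcons : (Walk.cons hadj' Walk.nil).IsPath := by
      simp [Walk.cons_isPath_iff, hadj'.ne]
    have hnuv : ¬ (fromEdgeSet (T'.edgeSet \ {s(u, v)})).Reachable u v := by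
      rw [reachable_del_iff hT'.2 (Walk.cons hadj' Walk.nil) hcons s(u, v)]
      simp
    set R : V → Prop := fun x => (fromEdgeSet (T'.edgeSet \ {s(u, v)})).Reachable u x with hR
    obtain ⟨a, b, hab, hep, hRa, hRb⟩ := exists_crossing R p (Reachable.refl u) hnuv
    have hTe'es : (fromEdgeSet (T'.edgeSet \ {s(u, v)})).edgeSet = T'.edgeSet \ {s(u, v)} :=
      edgeSet_fromEdgeSet_eq (fun x hx => T'.not_isDiag_of_mem_edgeSet hx.1)
    have heT : s(a, b) ∈ T.edgeSet := hab
    have hefne : s(a, b) ≠ s(u, v) := fun h => hfT (h ▸ heT)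
    have heT' : s(a, b) ∉ T'.edgeSet := by
      intro hmem
      have : (fromEdgeSet (T'.edgeSet \ {s(u, v)})).Adj a b := by
        rw [← mem_edgeSet, hTe'es]
        exact ⟨hmem, hefne⟩
      exact hRb (hRa.trans this.reachable)
    have hwef : w s(a, b) < w s(u, v) := hyp u v s(u, v) rfl hfG hfT p hp _ hep
    -- the unique path in T' from a to b and that it uses s(u,v)
    obtain ⟨p', hp', -⟩ := hT'.2.existsUnique_path a b
    have hmem' : s(u, v) ∈ p'.edges := by
      by_contra hnot
      have := (reachable_del_iff hT'.2 p' hp' s(u, v)).2 hnot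
      exact hRb (hRa.trans this)
    have hST''0 : IsSpanningTree G (fromEdgeSet (insert s(a, b) T'.edgeSet \ {s(u, v)})) :=
      (swap_iff hT' (edgeSet_subset_edgeSet.2 hT.1 heT) heT' rfl p' hp' hfT').2 hmem'
    obtain ⟨T'', hdef⟩ : ∃ X : SimpleGraph V,
        X = fromEdgeSet (insert s(a, b) T'.edgeSet \ {s(u, v)}) := ⟨_, rfl⟩
    have hST'' : IsSpanningTree G T'' := by rw [hdef]; exact hST''0
    have hT''fin : T''.edgeFinset = insert s(a, b) (T'.edgeFinset.erase s(u, v)) := by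
      rw [hdef]
      exact edgeFinset_irrel'.trans
        (edgeFinset_swap (fun h => hab.ne (Sym2.isDiag_iff_proj_eq |>.1 h)) hefne.symm)
    have hsum'' : ∑ x ∈ T''.edgeFinset, w x = ∑ x ∈ T'.edgeFinset, w x + w s(a, b) - w s(u, v) := by
      rw [hT''fin]
      exact sum_swap_eq (mem_edgeFinset.2 hfT') (fun h => heT' (mem_edgeFinset.1 h)) w
    have hlt'' : ∑ x ∈ T''.edgeFinset, w x < ∑ x ∈ T'.edgeFinset, w x := by
      rw [hsum'']; linarith
    by_cases hTT : T'' = T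
    · rw [← hTT]
      exact lt_of_eq_of_lt (by congr 1 <;> exact edgeFinset_irrel') hlt''
    · -- card decreases
      have hsd : T''.edgeFinset \ T.edgeFinset = (T'.edgeFinset \ T.edgeFinset).erase s(u, v) := by
        rw [hT''fin]
        ext x
        simp only [Finset.mem_sdiff, Finset.mem_insert, Finset.mem_erase, mem_edgeFinset]
        constructor
        · rintro ⟨rfl | ⟨hx1, hx2⟩, hx3⟩
          · exact absurd heT hx3
          · exact ⟨hx1, hx2, hx3⟩
        · rintro ⟨hx1, hx2, hx3⟩
          exact ⟨Or.inr ⟨hx1, hx2⟩, hx3⟩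
      have hcard'' : (T''.edgeFinset \ T.edgeFinset).card ≤ n := by
        rw [hsd, Finset.card_erase_of_mem]
        · omega
        · rw [Finset.mem_sdiff, mem_edgeFinset, mem_edgeFinset]
          exact ⟨hfT', hfT⟩
      refine (ih T'' hST'' hTT hcard'').trans hlt''


end SwapAux

/-- With the path-family decomposition — `Pi i` the (tree-)edge set of path
`π_i ∈ Π`, and for each non-tree edge `f` a set `D f` of indices such that the
tree path between `f`'s endpoints is the disjoint union of the paths `π_i`,
`i ∈ D f` — letting `A_i = Pi i` and `B_i` be the non-tree edges `f` with
`i ∈ D f`: a pair `(e,f)` is a swap for `T` iff `e ∈ A_i` and `f ∈ B_i` for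
some `i`; consequently, a parameter vector `p` makes `T` the unique minimum
spanning tree iff for every `i` each edge of `A_i` is strictly lighter than
each edge of `B_i`. -/

theorem path_family_swap_characterization {V : Type*} [Fintype V] [DecidableEq V]
    {d : ℕ} {ι : Type*} [DecidableEq ι]
    (G T : SimpleGraph V) (cost : Sym2 V → Fin d → ℝ)
    (hG : G.Connected) (hT : IsSpanningTree G T)
    (Pi : ι → Finset (Sym2 V)) (hPi : ∀ i, Pi i ⊆ T.edgeFinset)
    (D : Sym2 V → Finset ι)
    (hdecomp : ∀ f ∈ G.edgeSet, f ∉ T.edgeSet → ∀ u v : V, f = s(u, v) →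
      ∀ p : T.Walk u v, p.IsPath →
        p.edges.toFinset = (D f).biUnion Pi ∧
        ∀ i ∈ D f, ∀ j ∈ D f, i ≠ j → Disjoint (Pi i) (Pi j)) :
    (∀ e f : Sym2 V, IsSwap G T e f ↔
        ∃ i : ι, e ∈ Pi i ∧ (f ∈ G.edgeSet ∧ f ∉ T.edgeSet ∧ i ∈ D f)) ∧
    (∀ p : Fin d → ℝ,
      (∀ T' : SimpleGraph V, IsSpanningTree G T' → T' ≠ T →
          paramWeight T cost p < paramWeight T' cost p) ↔
        (∀ i : ι, ∀ e ∈ Pi i, ∀ f : Sym2 V,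
          f ∈ G.edgeSet → f ∉ T.edgeSet → i ∈ D f →
            dot (cost e) p < dot (cost f) p)) := by
  classical
  obtain ⟨hTG, hTree⟩ := hT
  have hrep : ∀ f : Sym2 V, ∃ u v, f = s(u, v) :=
    fun f => ⟨f.out.1, f.out.2, by exact (Quot.out_eq f).symm⟩
  constructor
  · intro e f
    constructor
    · rintro ⟨heT, hfG, hfT, hsp⟩
      obtain ⟨u, v, rfl⟩ := hrep f
      obtain ⟨q, hq, -⟩ := hTree.existsUnique_path u v
      have hep : e ∈ q.edges := (SwapAux.swap_iff ⟨hTG, hTree⟩ hfG hfT rfl q hq heT).1 hsp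
      obtain ⟨hPE, -⟩ := hdecomp _ hfG hfT u v rfl q hq
      have hmem : e ∈ (D s(u, v)).biUnion Pi := hPE ▸ List.mem_toFinset.2 hep
      obtain ⟨i, hiD, hei⟩ := Finset.mem_biUnion.1 hmem
      exact ⟨i, hei, hfG, hfT, hiD⟩
    · rintro ⟨i, hei, hfG, hfT, hiD⟩
      have heT : e ∈ T.edgeSet := mem_edgeFinset.1 (hPi i hei)
      obtain ⟨u, v, rfl⟩ := hrep f
      obtain ⟨q, hq, -⟩ := hTree.existsUnique_path u v
      obtain ⟨hPE, -⟩ := hdecomp _ hfG hfT u v rfl q hq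
      have hep : e ∈ q.edges :=
        List.mem_toFinset.1 (hPE ▸ Finset.mem_biUnion.2 ⟨i, hiD, hei⟩)
      exact ⟨heT, hfG, hfT, (SwapAux.swap_iff ⟨hTG, hTree⟩ hfG hfT rfl q hq heT).2 hep⟩
  · intro p
    constructor
    · intro hmin i e hei f hfG hfT hiD
      have heT : e ∈ T.edgeSet := mem_edgeFinset.1 (hPi i hei)
      obtain ⟨u, v, rfl⟩ := hrep f
      have hnd : ¬ (s(u, v) : Sym2 V).IsDiag := G.not_isDiag_of_mem_edgeSet hfG
      have hef : e ≠ s(u, v) := fun h => hfT (h ▸ heT)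
      obtain ⟨q, hq, -⟩ := hTree.existsUnique_path u v
      obtain ⟨hPE, -⟩ := hdecomp _ hfG hfT u v rfl q hq
      have hep : e ∈ q.edges :=
        List.mem_toFinset.1 (hPE ▸ Finset.mem_biUnion.2 ⟨i, hiD, hei⟩)
      have hsp := (SwapAux.swap_iff ⟨hTG, hTree⟩ hfG hfT rfl q hq heT).2 hep
      set Ts := fromEdgeSet ((insert s(u, v) T.edgeSet) \ {e}) with hTs
      have hnd_all : ∀ x ∈ (insert s(u, v) T.edgeSet) \ {e}, ¬ x.IsDiag := by
        rintro x ⟨hx, -⟩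
        rcases Set.mem_insert_iff.1 hx with rfl | hx
        · exact hnd
        · exact T.not_isDiag_of_mem_edgeSet hx
      have hne : Ts ≠ T := by
        intro h
        have : s(u, v) ∈ Ts.edgeSet := by
          rw [hTs, SwapAux.edgeSet_fromEdgeSet_eq hnd_all]
          exact ⟨Set.mem_insert _ _, fun h => hef (Set.mem_singleton_iff.1 h).symm⟩
        rw [h] at this
        exact hfT this
      have hlt := hmin Ts hsp hne
      have hEF : paramWeight Ts cost p
          = ∑ x ∈ insert s(u, v) (T.edgeFinset.erase e), dot (cost x) p := by
        unfold paramWeight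
        congr 1
        exact SwapAux.edgeFinset_irrel'.trans (SwapAux.edgeFinset_swap hnd hef)
      have hsum2 : ∑ x ∈ insert s(u, v) (T.edgeFinset.erase e), dot (cost x) p
          = (∑ x ∈ T.edgeFinset, dot (cost x) p) + dot (cost s(u, v)) p - dot (cost e) p :=
        SwapAux.sum_swap_eq (mem_edgeFinset.2 heT) (fun h => hfT (mem_edgeFinset.1 h)) _
      have hPW : paramWeight T cost p = ∑ x ∈ T.edgeFinset, dot (cost x) p := by
        unfold paramWeight
        congr 1
      rw [hEF, hsum2, hPW] at hlt
      linarith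
    · intro hineq T' hST' hne
      have hyp : ∀ (u v : V) (f : Sym2 V), f = s(u, v) → f ∈ G.edgeSet → f ∉ T.edgeSet →
          ∀ q : T.Walk u v, q.IsPath → ∀ e ∈ q.edges, dot (cost e) p < dot (cost f) p := by
        intro u v f hf hfG hfT q hq e he
        obtain ⟨hPE, -⟩ := hdecomp f hfG hfT u v hf q hq
        have hmem : e ∈ (D f).biUnion Pi := hPE ▸ List.mem_toFinset.2 he
        obtain ⟨i, hiD, hei⟩ := Finset.mem_biUnion.1 hmem
        exact hineq i e hei f hfG hfT hiD
      have hmain := SwapAux.weight_lt ⟨hTG, hTree⟩ (fun e => dot (cost e) p) hyp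
        ((T'.edgeFinset \ T.edgeFinset).card) T' hST' hne le_rfl
      calc paramWeight T cost p = ∑ x ∈ T.edgeFinset, dot (cost x) p := by
            unfold paramWeight; congr 1
        _ < ∑ x ∈ T'.edgeFinset, dot (cost x) p := hmain
        _ = paramWeight T' cost p := by unfold paramWeight; congr 1
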